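/- Let H₁₁ = diag(1,1,1), H₁₂ = diag(0,1,1), H₂₁ = diag(1,0,1), and H₂₂ = diag(1,1,1) be diagonal 3×3 complex matrices, and let V₁₁ = V₁₂ = (1,0,1)ᵀ and V₂₁ = V₂₂ = (0,1,1)ᵀ in ℂ³. Then at Receiver 1 the three vectors H₁₁·V₁₁, H₁₂·V₁₂, and H₁₁·V₂₁ are linearly independent in ℂ³, and at Receiver 2 the three vectors H₂₁·V₂₁, H₂₂·V₂₂, and H₂₁·V₁₁ are linearly independent in ℂ³; i.e., at each receiver the two desired signal vectors are linearly independent of the aligned interference, so each receiver can recover one interference-free dimension per desired message by zero-forcing. -/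

import Mathlib

open Matrix

/-- Zero-forcing feasibility in the 3-carrier 2-user X channel: with channel matrices
`H₁₁ = diag(1,1,1)`, `H₁₂ = diag(0,1,1)`, `H₂₁ = diag(1,0,1)`, `H₂₂ = diag(1,1,1)` and
beamforming vectors `V₁₁ = V₁₂ = (1,0,1)ᵀ`, `V₂₁ = V₂₂ = (0,1,1)ᵀ`, at Receiver 1 the
vectors `H₁₁·V₁₁, H₁₂·V₁₂, H₁₁·V₂₁` are linearly independent in `ℂ³`, and at Receiver 2
the vectors `H₂₁·V₂₁, H₂₂·V₂₂, H₂₁·V₁₁` are linearly independent in `ℂ³`. -/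
theorem stmt10 :
    let H11 : Matrix (Fin 3) (Fin 3) ℂ := Matrix.diagonal ![1, 1, 1]
    let H12 : Matrix (Fin 3) (Fin 3) ℂ := Matrix.diagonal ![0, 1, 1]
    let H21 : Matrix (Fin 3) (Fin 3) ℂ := Matrix.diagonal ![1, 0, 1]
    let H22 : Matrix (Fin 3) (Fin 3) ℂ := Matrix.diagonal ![1, 1, 1]
    let V11 : Fin 3 → ℂ := ![1, 0, 1]
    let V12 : Fin 3 → ℂ := ![1, 0, 1]
    let V21 : Fin 3 → ℂ := ![0, 1, 1]
    let V22 : Fin 3 → ℂ := ![0, 1, 1]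
    LinearIndependent ℂ ![H11.mulVec V11, H12.mulVec V12, H11.mulVec V21] ∧
    LinearIndependent ℂ ![H21.mulVec V21, H22.mulVec V22, H21.mulVec V11] := by
  intro H11 H12 H21 H22 V11 V12 V21 V22
  have e1 : H11.mulVec V11 = ![1, 0, 1] := by
    funext i; fin_cases i <;> simp [H11, V11, mulVec, dotProduct, Fin.sum_univ_three]
  have e2 : H12.mulVec V12 = ![0, 0, 1] := by
    funext i; fin_cases i <;> simp [H12, V12, mulVec, dotProduct, Fin.sum_univ_three]
  have e3 : H11.mulVec V21 = ![0, 1, 1] := by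
    funext i; fin_cases i <;> simp [H11, V21, mulVec, dotProduct, Fin.sum_univ_three]
  have f1 : H21.mulVec V21 = ![0, 0, 1] := by
    funext i; fin_cases i <;> simp [H21, V21, mulVec, dotProduct, Fin.sum_univ_three]
  have f3 : H21.mulVec V11 = ![1, 0, 1] := by
    funext i; fin_cases i <;> simp [H21, V11, mulVec, dotProduct, Fin.sum_univ_three]
  rw [e1, e2, e3, f1, f3]
  constructor
  · have : (![![1, 0, 1], ![0, 0, 1], ![0, 1, 1]] : Fin 3 → Fin 3 → ℂ)
        = (Matrix.of ![![(1:ℂ), 0, 1], ![0, 0, 1], ![0, 1, 1]]).row := rfl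
    rw [this, Matrix.linearIndependent_rows_iff_isUnit, Matrix.isUnit_iff_isUnit_det]
    simp [Matrix.det_fin_three]
  · have : (![![0, 0, 1], ![0, 1, 1], ![1, 0, 1]] : Fin 3 → Fin 3 → ℂ)
        = (Matrix.of ![![(0:ℂ), 0, 1], ![0, 1, 1], ![1, 0, 1]]).row := rfl
    rw [this, Matrix.linearIndependent_rows_iff_isUnit, Matrix.isUnit_iff_isUnit_det]
    simp [Matrix.det_fin_three]
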